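/- Let f : ℝ^d → ℝ be differentiable with an L-Lipschitz gradient (L > 0) and bounded below by f_inf, and let {Θ_t} satisfy Θ_{t+1} = Θ_t − α_t ∇f(Θ_t) with 0 ≤ α_t ≤ 2/L for all t. Then the sequence of objective values f(Θ_t) converges to a finite limit, and this limit is at least f_inf. -/

import Mathlib

open Filter

open scoped RealInnerProductSpace in
lemma descent_lemma
    (d : ℕ) (f : EuclideanSpace ℝ (Fin d) → ℝ)
    (g : EuclideanSpace ℝ (Fin d) → EuclideanSpace ℝ (Fin d))
    (L : ℝ) (hL : 0 < L)
    (hgrad : ∀ x, HasGradientAt f (g x) x)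
    (hlip : ∀ x y, ‖g x - g y‖ ≤ L * ‖x - y‖)
    (x v : EuclideanSpace ℝ (Fin d)) :
    f (x + v) ≤ f x + ⟪g x, v⟫ + L / 2 * ‖v‖ ^ 2 := by
  set φ : ℝ → ℝ := fun s => f (x + s • v) - s * ⟪g x, v⟫ - L * s ^ 2 / 2 * ‖v‖ ^ 2 with hφ
  have hφ' : ∀ s : ℝ, HasDerivAt φ
      (⟪g (x + s • v), v⟫ - ⟪g x, v⟫ - L * s * ‖v‖ ^ 2) s := by
    intro s
    have hc : HasDerivAt (fun s : ℝ => x + s • v) v s := by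
      simpa using ((hasDerivAt_id s).smul_const v).const_add x
    have h1 : HasDerivAt (fun s : ℝ => f (x + s • v)) ⟪g (x + s • v), v⟫ s := by
      have := ((hgrad (x + s • v)).hasFDerivAt).comp_hasDerivAt s hc
      simp at this; exact this
    have h2 : HasDerivAt (fun s : ℝ => s * ⟪g x, v⟫) ⟪g x, v⟫ s := by
      simpa using (hasDerivAt_id s).mul_const (⟪g x, v⟫ : ℝ)
    have h3 : HasDerivAt (fun s : ℝ => L * s ^ 2 / 2 * ‖v‖ ^ 2) (L * s * ‖v‖ ^ 2) s := by
      have : HasDerivAt (fun s : ℝ => s ^ 2) (2 * s) s := by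
        simpa using hasDerivAt_pow 2 s
      have := ((this.const_mul L).div_const 2).mul_const (‖v‖ ^ 2)
      exact this.congr_deriv (by ring)
    exact (h1.sub h2).sub h3
  have hanti : AntitoneOn φ (Set.Icc (0:ℝ) 1) := by
    apply antitoneOn_of_deriv_nonpos (convex_Icc 0 1)
    · exact fun s _ => (hφ' s).continuousAt.continuousWithinAt
    · intro s _; exact (hφ' s).differentiableAt.differentiableWithinAt
    · intro s hs
      rw [(hφ' s).deriv]
      have hs0 : (0:ℝ) ≤ s := le_of_lt (by simpa using (Set.mem_Ioo.mp (by simpa using hs)).1)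
      have hb : ⟪g (x + s • v) - g x, v⟫ ≤ L * s * ‖v‖ ^ 2 := by
        calc ⟪g (x + s • v) - g x, v⟫ ≤ ‖g (x + s • v) - g x‖ * ‖v‖ :=
              real_inner_le_norm _ _
          _ ≤ (L * ‖(x + s • v) - x‖) * ‖v‖ := by
              gcongr; exact hlip _ _
          _ = L * s * ‖v‖ ^ 2 := by
              simp [norm_smul, abs_of_nonneg hs0]; ring
      have := hb
      rw [inner_sub_left] at this
      linarith
  have key := hanti (Set.mem_Icc.mpr ⟨le_refl 0, zero_le_one⟩)
      (Set.mem_Icc.mpr ⟨zero_le_one, le_refl 1⟩) zero_le_one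
  simp only [hφ, zero_smul, add_zero, one_smul, zero_mul, zero_pow, mul_zero, sub_zero,
    one_pow, mul_one, zero_div] at key
  nlinarith [key]

/-- **Convergence of objective values.**
For the gradient iteration with `0 ≤ α t ≤ 2/L` on an `L`-smooth objective bounded
below by `f_inf`, the objective values `f (Θ t)` converge to a finite limit, and the
limit is at least `f_inf`. -/
theorem objective_values_converge
    (d : ℕ) (f : EuclideanSpace ℝ (Fin d) → ℝ)
    (g : EuclideanSpace ℝ (Fin d) → EuclideanSpace ℝ (Fin d))
    (L f_inf : ℝ) (hL : 0 < L)
    (hgrad : ∀ x, HasGradientAt f (g x) x)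
    (hlip : ∀ x y, ‖g x - g y‖ ≤ L * ‖x - y‖)
    (hbdd : ∀ x, f_inf ≤ f x)
    (Θ : ℕ → EuclideanSpace ℝ (Fin d)) (α : ℕ → ℝ)
    (hiter : ∀ t, Θ (t + 1) = Θ t - α t • g (Θ t))
    (hα0 : ∀ t, 0 ≤ α t) (hα2 : ∀ t, α t ≤ 2 / L) :
    ∃ c : ℝ, Tendsto (fun t => f (Θ t)) atTop (nhds c) ∧ f_inf ≤ c := by
  have hdec : ∀ t, f (Θ (t + 1)) ≤ f (Θ t) := by
    intro t
    have h := descent_lemma d f g L hL hgrad hlip (Θ t) (-(α t • g (Θ t)))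
    have heq : Θ t + -(α t • g (Θ t)) = Θ (t + 1) := by rw [hiter]; abel
    rw [heq] at h
    have hinner : (inner ℝ (g (Θ t)) (-(α t • g (Θ t))) : ℝ)
        = -(α t * ‖g (Θ t)‖ ^ 2) := by
      rw [inner_neg_right, real_inner_smul_right, real_inner_self_eq_norm_sq]
    have hnorm : ‖-(α t • g (Θ t))‖ ^ 2 = α t ^ 2 * ‖g (Θ t)‖ ^ 2 := by
      rw [norm_neg, norm_smul, Real.norm_eq_abs, abs_of_nonneg (hα0 t)]; ring
    rw [hinner, hnorm] at h
    have hLa : L * α t ≤ 2 := by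
      have := hα2 t
      calc L * α t ≤ L * (2 / L) := by gcongr
        _ = 2 := by field_simp
    nlinarith [sq_nonneg (‖g (Θ t)‖), sq_nonneg (α t), hα0 t, mul_nonneg (hα0 t) (sq_nonneg (‖g (Θ t)‖))]
  have hanti : Antitone fun t => f (Θ t) := antitone_nat_of_succ_le hdec
  have hbb : BddBelow (Set.range fun t => f (Θ t)) :=
    ⟨f_inf, by rintro y ⟨t, rfl⟩; exact hbdd _⟩
  refine ⟨⨅ t, f (Θ t), tendsto_atTop_ciInf hanti hbb, le_ciInf fun t => hbdd _⟩
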